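/- Let Ω be a nonempty compact subset of ℝ^n (n ≥ 2) and v a unit vector. Then for every b ≥ l_Ω(v), the reflection R_{v,b} maps the closure of cap^+_{v,b}(Ω) into Ω; in particular the infimum defining l_Ω(v) is attained, i.e. R_{v,l_Ω(v)}(cap^+_{v,l_Ω(v)}(Ω)) ⊆ Ω. -/

import Mathlib

open scoped RealInnerProductSpace

/-- Reflection in the hyperplane `{x : x·v = b}` (for a unit vector `v`). -/
noncomputable def reflHyp {n : ℕ} (v : EuclideanSpace ℝ (Fin n)) (b : ℝ)
    (x : EuclideanSpace ℝ (Fin n)) : EuclideanSpace ℝ (Fin n) :=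
  x - (2 * (⟪x, v⟫ - b)) • v

/-- The open cap of `X` above the hyperplane `{x : x·v = b}`. -/
def cap {n : ℕ} (X : Set (EuclideanSpace ℝ (Fin n))) (v : EuclideanSpace ℝ (Fin n)) (b : ℝ) :
    Set (EuclideanSpace ℝ (Fin n)) :=
  X ∩ {x | b < ⟪x, v⟫}

/-- The level of the maximal cap of `X` in direction `v`. -/
noncomputable def level {n : ℕ} (X : Set (EuclideanSpace ℝ (Fin n)))
    (v : EuclideanSpace ℝ (Fin n)) : ℝ :=
  sInf {a : ℝ | ∀ b : ℝ, a ≤ b → reflHyp v b '' cap X v b ⊆ X}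

/-- The minimal unfolded region (heart) of `X`. -/
noncomputable def Uf {n : ℕ} (X : Set (EuclideanSpace ℝ (Fin n))) :
    Set (EuclideanSpace ℝ (Fin n)) :=
  ⋂ v ∈ {v : EuclideanSpace ℝ (Fin n) | ‖v‖ = 1}, {x | ⟪x, v⟫ ≤ level X v}

/-- The δ-parallel body of `Ω`: the union of closed δ-balls centered in `Ω`. -/
def parallelBody {n : ℕ} (Ω : Set (EuclideanSpace ℝ (Fin n))) (δ : ℝ) :
    Set (EuclideanSpace ℝ (Fin n)) :=
  ⋃ x ∈ Ω, Metric.closedBall x δ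

lemma inner_reflHyp {n : ℕ} (v : EuclideanSpace ℝ (Fin n)) (hv : ‖v‖ = 1) (b : ℝ)
    (x : EuclideanSpace ℝ (Fin n)) : ⟪reflHyp v b x, v⟫ = 2 * b - ⟪x, v⟫ := by
  have hvv : ⟪v, v⟫ = (1 : ℝ) := by
    rw [real_inner_self_eq_norm_sq, hv]; norm_num
  simp only [reflHyp, inner_sub_left, real_inner_smul_left, hvv]
  ring

lemma continuous_reflHyp {n : ℕ} (v : EuclideanSpace ℝ (Fin n)) (b : ℝ) :
    Continuous (reflHyp v b) := by
  unfold reflHyp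
  fun_prop

theorem stmt1 {n : ℕ} (hn : 2 ≤ n) (Ω : Set (EuclideanSpace ℝ (Fin n)))
    (hΩne : Ω.Nonempty) (hΩ : IsCompact Ω) (v : EuclideanSpace ℝ (Fin n)) (hv : ‖v‖ = 1) :
    (∀ b : ℝ, level Ω v ≤ b → reflHyp v b '' closure (cap Ω v b) ⊆ Ω) ∧
      reflHyp v (level Ω v) '' cap Ω v (level Ω v) ⊆ Ω := by
  set S : Set ℝ := {a : ℝ | ∀ b : ℝ, a ≤ b → reflHyp v b '' cap Ω v b ⊆ Ω} with hS
  have hlev : level Ω v = sInf S := rfl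
  -- max and min of the linear functional on Ω
  have hcont : Continuous fun x : EuclideanSpace ℝ (Fin n) => ⟪x, v⟫ :=
    continuous_id.inner continuous_const
  obtain ⟨xM, hxM, hMmax⟩ := hΩ.exists_isMaxOn hΩne hcont.continuousOn
  obtain ⟨xm, hxm, hmmin⟩ := hΩ.exists_isMinOn hΩne hcont.continuousOn
  set M : ℝ := ⟪xM, v⟫
  set m : ℝ := ⟪xm, v⟫
  -- S is nonempty
  have hSne : S.Nonempty := by
    refine ⟨M, fun b hb => ?_⟩
    have : cap Ω v b = ∅ := by
      ext x
      simp only [cap, Set.mem_inter_iff, Set.mem_setOf_eq, Set.mem_empty_iff_false,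
        iff_false, not_and, not_lt]
      intro hx
      exact le_trans (hMmax hx) hb
    simp [this]
  -- S is bounded below by m
  have hSbdd : BddBelow S := by
    refine ⟨m, fun a ha => ?_⟩
    by_contra hlt
    push_neg at hlt
    have hx0 : xm ∈ cap Ω v a := ⟨hxm, hlt⟩
    have := ha a le_rfl ⟨xm, hx0, rfl⟩
    have h1 : m ≤ ⟪reflHyp v a xm, v⟫ := hmmin this
    rw [inner_reflHyp v hv] at h1
    have h2 : m ≤ ⟪xm, v⟫ := le_refl m
    linarith
  -- key: for every b ≥ level, the reflection of the cap lies in Ω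
  have key : ∀ b : ℝ, level Ω v ≤ b → reflHyp v b '' cap Ω v b ⊆ Ω := by
    intro b hb y hy
    obtain ⟨x, ⟨hxΩ, hxb⟩, rfl⟩ := hy
    -- for all b' in (b, ⟪x,v⟫), reflHyp v b' x ∈ Ω
    have hstep : ∀ b' : ℝ, b < b' → b' < ⟪x, v⟫ → reflHyp v b' x ∈ Ω := by
      intro b' hb1 hb2
      have hlt : sInf S < b' := lt_of_le_of_lt (hlev ▸ hb) hb1
      obtain ⟨a, haS, halt⟩ := exists_lt_of_csInf_lt hSne hlt
      exact haS b' halt.le ⟨x, ⟨hxΩ, hb2⟩, rfl⟩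
    -- take the limit b' → b⁺ using closedness of Ω
    have hT : IsClosed {b' : ℝ | reflHyp v b' x ∈ Ω} := by
      have hg : Continuous fun b' : ℝ => reflHyp v b' x := by
        unfold reflHyp
        exact continuous_const.sub
          ((continuous_const.mul (continuous_const.sub continuous_id)).smul continuous_const)
      exact hΩ.isClosed.preimage hg
    have hsub : Set.Ioo b ⟪x, v⟫ ⊆ {b' : ℝ | reflHyp v b' x ∈ Ω} :=
      fun b' hb' => hstep b' hb'.1 hb'.2
    have hbmem : b ∈ closure (Set.Ioo b ⟪x, v⟫) := by
      rw [closure_Ioo (ne_of_lt hxb)]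
      exact ⟨le_refl b, le_of_lt hxb⟩
    have := hT.closure_subset ((closure_mono hsub) hbmem)
    exact this
  refine ⟨fun b hb => ?_, key _ le_rfl⟩
  calc reflHyp v b '' closure (cap Ω v b)
      ⊆ closure (reflHyp v b '' cap Ω v b) :=
        image_closure_subset_closure_image (continuous_reflHyp v b)
    _ ⊆ closure Ω := closure_mono (key b hb)
    _ = Ω := hΩ.isClosed.closure_eq
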